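/- Let f ∈ ℤ[x] be squarefree of degree d with leading coefficient f_d, with roots α_1,...,α_d in the algebraic closure of ℚ, let K = ℚ(α_1,...,α_d) be the splitting field, let p be a prime with p ∤ f_d · disc(f), and let k ≥ 1. Then there exists a commutative ring A containing ℤ/p^kℤ and a ring homomorphism φ: ℤ[α_1,...,α_d] → A such that (i) φ restricts to a bijection between {α_1,...,α_d} and the set of roots of f in A, and (ii) for every γ ∈ ℤ[α_1,...,α_d] integral over ℤ with φ(γ) = 0, one has p^k | N_{K/ℚ}(γ). -/

import Mathlib

open Polynomial

lemma aux_mem_valuationSubring {K : Type*} [Field K] (V : ValuationSubring K) {x : K}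
    (hx : IsIntegral ℤ x) : x ∈ V := by
  apply LocalSubring.mem_of_isMax_of_isIntegral V.isMax_toLocalSubring
  obtain ⟨P, hmon, hev⟩ := hx
  refine ⟨P.map (Int.castRingHom V.toLocalSubring.toSubring), hmon.map _, ?_⟩
  rw [Polynomial.eval₂_map,
    show ((algebraMap V.toLocalSubring.toSubring K).comp
        (Int.castRingHom V.toLocalSubring.toSubring)) = algebraMap ℤ K from
      RingHom.ext_int _ _]
  exact hev

lemma aux_dvd_of_div_mem {K : Type*} [Field K] [CharZero K] (V : ValuationSubring K)
    {p : ℕ} (hp : p.Prime) (hpV : ((p : ℕ) : K) ∈ V)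
    (hpu : ¬ IsUnit (⟨((p : ℕ) : K), hpV⟩ : V)) :
    ∀ (j : ℕ) (z : ℤ), (∃ c ∈ V, ((z : ℤ) : K) = ((p : ℕ) : K) ^ j * c) → (p : ℤ) ^ j ∣ z := by
  intro j
  induction j with
  | zero => intro z _; simp
  | succ j ih =>
    rintro z ⟨c, hc, hz⟩
    have hpK : ((p : ℕ) : K) ≠ 0 := Nat.cast_ne_zero.mpr hp.pos.ne'
    have h1 : (p : ℤ) ^ j ∣ z := by
      refine ih z ⟨((p : ℕ) : K) * c, mul_mem hpV hc, ?_⟩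
      rw [hz]; ring
    obtain ⟨y, rfl⟩ := h1
    have hy : ((y : ℤ) : K) = ((p : ℕ) : K) * c := by
      have hpj : ((p : ℕ) : K) ^ j ≠ 0 := pow_ne_zero _ hpK
      apply mul_left_cancel₀ hpj
      push_cast at hz ⊢
      linear_combination hz
    have hpy : (p : ℤ) ∣ y := by
      by_contra hndvd
      have hcop : IsCoprime ((p : ℕ) : ℤ) y := by
        rw [Int.isCoprime_iff_gcd_eq_one, Int.gcd]
        simp only [Int.natAbs_natCast]
        exact (hp.coprime_iff_not_dvd.mpr (fun h => hndvd (Int.natCast_dvd.mpr h)))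
      obtain ⟨a, b, hab⟩ := hcop
      have hmem : (a : K) + (b : K) * c ∈ V :=
        add_mem (intCast_mem V.toSubring a) (mul_mem (intCast_mem V.toSubring b) hc)
      refine hpu (isUnit_iff_exists_inv.mpr ⟨⟨(a : K) + (b : K) * c, hmem⟩, Subtype.ext ?_⟩)
      show ((p : ℕ) : K) * ((a : K) + (b : K) * c) = 1
      have h2 : ((a * (p : ℤ) + b * y : ℤ) : K) = 1 := by rw [hab]; simp
      push_cast at h2
      rw [hy] at h2
      rw [← h2]; ring
    obtain ⟨w, rfl⟩ := hpy
    exact ⟨w, by ring⟩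

local notation "L" => AlgebraicClosure ℚ

set_option maxHeartbeats 1600000 in
set_option synthInstance.maxHeartbeats 400000 in
/-- Reduction homomorphism modulo a prime power. `f ∈ ℤ[x]` squarefree of
degree `d` with roots `α₁,…,α_d` in the algebraic closure of `ℚ`,
`K = ℚ(α₁,…,α_d)` its splitting field, `p` a prime with
`p ∤ f_d · disc(f)` (here `Df = disc f = f_d^{2d-2} ∏_{i<j}(αᵢ-αⱼ)²`), `k ≥ 1`.
Then there is a commutative ring `A` containing `ℤ/p^kℤ` and a ring
homomorphism `φ : ℤ[α₁,…,α_d] → A` such that (i) `φ` restricts to a bijection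
between `{α₁,…,α_d}` and the roots of `f` in `A`, and (ii) every
`γ ∈ ℤ[α₁,…,α_d]` integral over `ℤ` with `φ(γ) = 0` satisfies
`p^k ∣ N_{K/ℚ}(γ)`. -/
theorem stmt_6 (f : Polynomial ℤ) (d : ℕ) (hd : f.natDegree = d)
    (hsf : Squarefree f) (α : Fin d → AlgebraicClosure ℚ)
    (hsplit : f.map (algebraMap ℤ (AlgebraicClosure ℚ)) =
      Polynomial.C ((f.leadingCoeff : ℤ) : AlgebraicClosure ℚ) *
        ∏ i, (Polynomial.X - Polynomial.C (α i)))
    (Df : ℤ)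
    (hDf : (Df : AlgebraicClosure ℚ) =
      ((f.leadingCoeff : ℤ) : AlgebraicClosure ℚ) ^ (2 * d - 2) *
        ∏ i, ∏ j ∈ Finset.univ.filter (fun j => i < j), (α i - α j) ^ 2)
    (p : ℕ) (hp : p.Prime) (hpd : ¬ (p : ℤ) ∣ f.leadingCoeff * Df)
    (k : ℕ) (hk : 1 ≤ k) :
    ∃ (A : Type) (_ : CommRing A) (ψ : ZMod (p ^ k) →+* A),
      Function.Injective ψ ∧
      ∃ φ : (Algebra.adjoin ℤ (Set.range α)) →+* A,
        Set.BijOn (fun x => φ x)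
          {x : Algebra.adjoin ℤ (Set.range α) |
            (x : AlgebraicClosure ℚ) ∈ Set.range α}
          {a : A | Polynomial.eval₂ (Int.castRingHom A) a f = 0} ∧
        ∀ γ : (Algebra.adjoin ℤ (Set.range α)),
          IsIntegral ℤ (γ : AlgebraicClosure ℚ) →
          ∀ hγ : (γ : AlgebraicClosure ℚ) ∈ IntermediateField.adjoin ℚ (Set.range α),
          φ γ = 0 →
          ∃ z : ℤ, (z : ℚ) = Algebra.norm ℚ
              (⟨(γ : AlgebraicClosure ℚ), hγ⟩ :
                IntermediateField.adjoin ℚ (Set.range α)) ∧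
            (p : ℤ) ^ k ∣ z := by

  classical
  have hprime : Prime (p : ℤ) := Nat.prime_iff_prime_int.mp hp
  have hpfd : ¬ (p : ℤ) ∣ f.leadingCoeff := fun h => hpd (h.mul_right _)
  have hpDf : ¬ (p : ℤ) ∣ Df := fun h => hpd (h.mul_left _)
  -- the local ring ℤ_(p) and a valuation subring of L dominating it
  set P : Ideal ℤ := Ideal.span {(p : ℤ)} with hPdef
  haveI hPp : P.IsPrime := (Ideal.span_singleton_prime hprime.ne_zero).mpr hprime
  have hpP : (p : ℤ) ∈ P := Ideal.mem_span_singleton_self _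
  have hu : ∀ s : P.primeCompl, IsUnit (algebraMap ℤ L (s : ℤ)) := by
    rintro ⟨s, hs⟩
    have hs0 : (s : ℤ) ≠ 0 := fun h => hs (h ▸ P.zero_mem)
    simp only [algebraMap_int_eq, eq_intCast]
    exact isUnit_iff_ne_zero.mpr (Int.cast_ne_zero.mpr hs0)
  let f0 : Localization.AtPrime P →+* L := IsLocalization.lift hu
  obtain ⟨V, hV, hVloc⟩ := IsLocalRing.exists_factor_valuationRing f0
  have hintV : ∀ x : ℤ, ((x : ℤ) : L) ∈ V := by
    intro x
    have := hV (algebraMap ℤ (Localization.AtPrime P) x)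
    rwa [show f0 (algebraMap ℤ (Localization.AtPrime P) x) = ((x : ℤ) : L) by
      rw [IsLocalization.lift_eq]; simp] at this
  have hcodres : ∀ y, (f0.codRestrict V.toSubring hV) y = ⟨f0 y, hV y⟩ := fun _ => rfl
  have hunitV : ∀ x : ℤ, ¬ (p : ℤ) ∣ x → IsUnit (⟨((x : ℤ) : L), hintV x⟩ : V) := by
    intro x hx
    have h1 : IsUnit (algebraMap ℤ (Localization.AtPrime P) x) := by
      rw [IsLocalization.AtPrime.isUnit_to_map_iff (Localization.AtPrime P) P]
      exact fun h => hx (Ideal.mem_span_singleton.mp h)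
    have h2 := h1.map (f0.codRestrict V.toSubring hV)
    have h3 : (f0.codRestrict V.toSubring hV) (algebraMap ℤ (Localization.AtPrime P) x)
        = ⟨((x : ℤ) : L), hintV x⟩ := by
      apply Subtype.ext
      show f0 (algebraMap ℤ (Localization.AtPrime P) x) = ((x : ℤ) : L)
      rw [IsLocalization.lift_eq]; simp
    rwa [h3] at h2
  have hintN : ((p : ℕ) : L) ∈ V := by exact_mod_cast hintV (p : ℤ)
  have hpuV : ¬ IsUnit (⟨((p : ℕ) : L), hintN⟩ : V) := by
    intro h
    have h3 : (f0.codRestrict V.toSubring hV) (algebraMap ℤ (Localization.AtPrime P) (p : ℤ))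
        = ⟨((p : ℕ) : L), hintN⟩ := by
      apply Subtype.ext
      show f0 (algebraMap ℤ (Localization.AtPrime P) (p : ℤ)) = ((p : ℕ) : L)
      rw [IsLocalization.lift_eq]; simp
    rw [← h3] at h
    have := hVloc.1 _ h
    rw [IsLocalization.AtPrime.isUnit_to_map_iff (Localization.AtPrime P) P] at this
    exact this hpP
  -- the ring R = ℤ[α₁,…,α_d]
  have hfdDf0 : f.leadingCoeff * Df ≠ 0 := fun h => hpd (h ▸ dvd_zero _)
  have hfd0 : ((f.leadingCoeff : ℤ) : L) ≠ 0 :=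
    Int.cast_ne_zero.mpr (left_ne_zero_of_mul hfdDf0)
  have hroot : ∀ i, Polynomial.aeval (α i) f = 0 := by
    intro i
    rw [Polynomial.aeval_def, Polynomial.eval₂_eq_eval_map, hsplit, Polynomial.eval_mul,
      Polynomial.eval_C, Polynomial.eval_prod]
    rw [Finset.prod_eq_zero (Finset.mem_univ i) (by simp), mul_zero]
  have hαV : ∀ i, α i ∈ V := by
    intro i
    have hβ : IsIntegral ℤ (f.leadingCoeff • α i) := isIntegral_leadingCoeff_smul f (α i) (hroot i)
    have hβV : ((f.leadingCoeff : ℤ) : L) * α i ∈ V := by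
      have := aux_mem_valuationSubring V hβ
      rwa [zsmul_eq_mul] at this
    obtain ⟨u, hu'⟩ := hunitV f.leadingCoeff hpfd
    have h1 : (((u⁻¹ : Vˣ) : V) : L) * ((f.leadingCoeff : ℤ) : L) = 1 := by
      have h0 := congrArg (fun v : V => (v : L)) u.inv_mul
      rw [hu'] at h0
      simpa using h0
    have h2 : (((u⁻¹ : Vˣ) : V) : L) * (((f.leadingCoeff : ℤ) : L) * α i) = α i := by
      rw [← mul_assoc, h1, one_mul]
    rw [← h2]
    exact mul_mem (SetLike.coe_mem _) hβV
  have hRV : ∀ x ∈ Algebra.adjoin ℤ (Set.range α), x ∈ V := by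
    intro x hx
    induction hx using Algebra.adjoin_induction with
    | mem y hy => obtain ⟨i, rfl⟩ := hy; exact hαV i
    | algebraMap r => simpa using hintV r
    | add a b _ _ ha hb => exact add_mem ha hb
    | mul a b _ _ ha hb => exact mul_mem ha hb
  -- the subring map ι : R → V and the prime 𝔪
  set R := Algebra.adjoin ℤ (Set.range α) with hRdef
  let ι : R →+* V := RingHom.codRestrict (SubringClass.subtype R) V.toSubring
      (fun x => hRV x x.2)
  have hιcoe : ∀ x : R, ((ι x : V) : L) = (x : L) := fun _ => rfl
  set 𝔪 : Ideal R := (IsLocalRing.maximalIdeal V).comap ι with h𝔪def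
  have hmem𝔪 : ∀ x : R, x ∈ 𝔪 ↔ ¬ IsUnit (ι x) := by
    intro x
    rw [h𝔪def, Ideal.mem_comap, IsLocalRing.mem_maximalIdeal, mem_nonunits_iff]
  have hp𝔪 : ((p : ℕ) : R) ∈ 𝔪 := by
    rw [hmem𝔪]
    intro h
    refine hpuV ?_
    have : ι ((p : ℕ) : R) = ⟨((p : ℕ) : L), hintN⟩ := by
      apply Subtype.ext
      rw [hιcoe]
      push_cast
      rfl
    rwa [this] at h
  -- differences of roots are units in V
  let αV : Fin d → V := fun i => ⟨α i, hαV i⟩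
  have hDfunit : IsUnit (⟨((Df : ℤ) : L), hintV Df⟩ : V) := hunitV Df hpDf
  have hEq : (⟨((Df : ℤ) : L), hintV Df⟩ : V) =
      (⟨((f.leadingCoeff : ℤ) : L), hintV f.leadingCoeff⟩ : V) ^ (2 * d - 2) *
        ∏ i, ∏ j ∈ Finset.univ.filter (fun j => i < j), (αV i - αV j) ^ 2 := by
    apply Subtype.ext
    push_cast
    rw [hDf]
  have hdiff𝔪 : ∀ i j : Fin d, i ≠ j → ∀ x : R, (x : L) = α i - α j → x ∉ 𝔪 := by
    intro i j hij x hx hmem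
    have hιx : ι x ∈ IsLocalRing.maximalIdeal V := Ideal.mem_comap.mp hmem
    have hι : ι x = αV i - αV j := by
      apply Subtype.ext; rw [hιcoe]; exact hx
    have hsq : (αV i - αV j) ^ 2 ∈ IsLocalRing.maximalIdeal V := by
      rw [sq]
      exact Ideal.mul_mem_left _ _ (hι ▸ hιx)
    have hdvd : (αV i - αV j) ^ 2 ∣
        ∏ i', ∏ j' ∈ Finset.univ.filter (fun j' => i' < j'), (αV i' - αV j') ^ 2 := by
      rcases lt_or_gt_of_ne hij with h | h
      · exact dvd_trans
          (Finset.dvd_prod_of_mem (fun j' => (αV i - αV j') ^ 2)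
            (Finset.mem_filter.mpr ⟨Finset.mem_univ _, h⟩))
          (Finset.dvd_prod_of_mem
            (fun i' => ∏ j' ∈ Finset.univ.filter (fun j' => i' < j'), (αV i' - αV j') ^ 2)
            (Finset.mem_univ i))
      · have heq2 : (αV i - αV j) ^ 2 = (αV j - αV i) ^ 2 := by ring
        rw [heq2]
        exact dvd_trans
          (Finset.dvd_prod_of_mem (fun j' => (αV j - αV j') ^ 2)
            (Finset.mem_filter.mpr ⟨Finset.mem_univ _, h⟩))
          (Finset.dvd_prod_of_mem
            (fun i' => ∏ j' ∈ Finset.univ.filter (fun j' => i' < j'), (αV i' - αV j') ^ 2)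
            (Finset.mem_univ j))
    have hDmem : (⟨((Df : ℤ) : L), hintV Df⟩ : V) ∈ IsLocalRing.maximalIdeal V := by
      rw [hEq]
      exact Ideal.mul_mem_left _ _ (Ideal.mem_of_dvd _ hdvd hsq)
    rw [IsLocalRing.mem_maximalIdeal, mem_nonunits_iff] at hDmem
    exact hDmem hDfunit
  -- the ring A
  set I : Ideal R := Ideal.span {((p : ℕ) : R) ^ k} with hIdef
  have hIm : I ≤ 𝔪 := by
    rw [hIdef, Ideal.span_le]
    intro x hx
    rw [Set.mem_singleton_iff] at hx
    subst hx
    exact Ideal.pow_mem_of_mem 𝔪 hp𝔪 k hk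
  let π : R →+* R ⧸ I := Ideal.Quotient.mk I
  have hπsurj : Function.Surjective π := Ideal.Quotient.mk_surjective
  set q : Ideal (R ⧸ I) := 𝔪.map π with hqdef
  haveI hq : q.IsPrime := Ideal.map_isPrime_of_surjective hπsurj
    (by rw [show RingHom.ker (Ideal.Quotient.mk I) = I from Ideal.mk_ker]; exact hIm)
  let A := Localization.AtPrime q
  let φ : R →+* A := (algebraMap (R ⧸ I) A).comp π
  have hcomap : q.comap π = 𝔪 := by
    rw [hqdef, Ideal.comap_map_of_surjective π hπsurj, ← RingHom.ker_eq_comap_bot,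
      show RingHom.ker (Ideal.Quotient.mk I) = I from Ideal.mk_ker, sup_eq_left.mpr hIm]
  have hφunit : ∀ x : R, IsUnit (φ x) ↔ x ∉ 𝔪 := by
    intro x
    show IsUnit (algebraMap (R ⧸ I) A (π x)) ↔ _
    rw [IsLocalization.AtPrime.isUnit_to_map_iff A q (π x)]
    constructor
    · intro h hx
      exact h (Ideal.mem_map_of_mem π hx)
    · intro hx h
      exact hx (by rwa [← hcomap, Ideal.mem_comap] : x ∈ 𝔪)
  have hφker : ∀ x : R, φ x = 0 ↔ ∃ s : R, s ∉ 𝔪 ∧ s * x ∈ I := by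
    intro x
    constructor
    · intro h
      obtain ⟨⟨m, hm⟩, hmx⟩ := (IsLocalization.map_eq_zero_iff q.primeCompl A (π x)).mp h
      obtain ⟨s, rfl⟩ := hπsurj m
      refine ⟨s, fun hs => hm (Ideal.mem_map_of_mem π hs), ?_⟩
      rw [← Ideal.Quotient.eq_zero_iff_mem]
      show π (s * x) = 0
      rw [map_mul]
      exact hmx
    · rintro ⟨s, hs, hsx⟩
      have h2 : IsUnit (φ s) := (hφunit s).mpr hs
      have h1 : φ s * φ x = 0 := by
        rw [← map_mul]
        show algebraMap (R ⧸ I) A (π (s * x)) = 0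
        rw [Ideal.Quotient.eq_zero_iff_mem.mpr hsx, map_zero]
      exact (h2.mul_right_eq_zero).mp h1
  -- characteristic of A is p^k
  have hkpred : k - 1 + 1 = k := Nat.succ_pred_eq_of_pos hk
  have hpkA : ((p : ℕ) : A) ^ k = 0 := by
    have h1 : φ (((p : ℕ) : R) ^ k) = 0 := by
      show algebraMap (R ⧸ I) A (π (((p : ℕ) : R) ^ k)) = 0
      rw [Ideal.Quotient.eq_zero_iff_mem.mpr (Ideal.subset_span (Set.mem_singleton _)), map_zero]
    rw [map_pow, map_natCast] at h1
    exact h1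
  have hpk1A : ((p : ℕ) : A) ^ (k - 1) ≠ 0 := by
    intro h0
    have h1 : φ (((p : ℕ) : R) ^ (k - 1)) = 0 := by
      rw [map_pow, map_natCast]; exact h0
    obtain ⟨s, hs, hsx⟩ := (hφker _).mp h1
    rw [hIdef, Ideal.mem_span_singleton] at hsx
    obtain ⟨r, hr⟩ := hsx
    have hcoe := congrArg (fun x : R => (x : L)) hr
    push_cast at hcoe
    have hpL : ((p : ℕ) : L) ≠ 0 := Nat.cast_ne_zero.mpr hp.pos.ne'
    have hsL : (s : L) = ((p : ℕ) : L) * (r : L) := by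
      have hpow : ((p : ℕ) : L) ^ (k - 1) ≠ 0 := pow_ne_zero _ hpL
      apply mul_right_cancel₀ hpow
      rw [hcoe]
      conv_lhs => rw [← hkpred]
      rw [pow_succ]
      ring
    have hsR : s = ((p : ℕ) : R) * r := by
      apply Subtype.ext
      push_cast
      exact hsL
    exact hs (hsR ▸ Ideal.mul_mem_right r 𝔪 hp𝔪)
  haveI hcharA : CharP A (p ^ k) := by
    have h1 : ((p ^ k : ℕ) : A) = 0 := by push_cast; exact hpkA
    have hdvd := ringChar.dvd h1
    obtain ⟨j, hjk, hcj⟩ := (Nat.dvd_prime_pow hp).mp hdvd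
    have hjeq : j = k := by
      by_contra hne
      have hj1 : j ≤ k - 1 := Nat.le_pred_of_lt (lt_of_le_of_ne hjk hne)
      have h2 : ((p ^ (k - 1) : ℕ) : A) = 0 :=
        (CharP.cast_eq_zero_iff A (ringChar A) _).mpr (hcj ▸ pow_dvd_pow p hj1)
      rw [Nat.cast_pow] at h2
      exact hpk1A h2
    have : ringChar A = p ^ k := by rw [hcj, hjeq]
    exact this ▸ ringChar.charP A
  -- factorization of f over R and A
  let αR : Fin d → R := fun i => ⟨α i, Algebra.subset_adjoin ⟨i, rfl⟩⟩
  have hfR : f.map (Int.castRingHom R) = C ((f.leadingCoeff : ℤ) : R) * ∏ i, (X - C (αR i)) := by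
    apply Polynomial.map_injective (SubringClass.subtype R) Subtype.val_injective
    rw [Polynomial.map_map, Polynomial.map_mul, Polynomial.map_C, Polynomial.map_prod]
    simp only [Polynomial.map_sub, Polynomial.map_X, Polynomial.map_C]
    rw [show (SubringClass.subtype R).comp (Int.castRingHom R) = algebraMap ℤ L from
      RingHom.ext_int _ _, hsplit]
    rfl
  letI : Ring A := CommRing.toRing
  have hfA : f.map (Int.castRingHom A) =
      C (φ ((f.leadingCoeff : ℤ) : R)) * ∏ i, (X - C (φ (αR i))) := by
    rw [show (Int.castRingHom A) = φ.comp (Int.castRingHom R) from RingHom.ext_int _ _,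
      ← Polynomial.map_map, hfR, Polynomial.map_mul, Polynomial.map_C, Polynomial.map_prod]
    simp only [Polynomial.map_sub, Polynomial.map_X, Polynomial.map_C]
  have hevalA : ∀ a : A, Polynomial.eval₂ (Int.castRingHom A) a f =
      φ ((f.leadingCoeff : ℤ) : R) * ∏ i, (a - φ (αR i)) := by
    intro a
    rw [Polynomial.eval₂_eq_eval_map, hfA, Polynomial.eval_mul, Polynomial.eval_C,
      Polynomial.eval_prod]
    simp only [Polynomial.eval_sub, Polynomial.eval_X, Polynomial.eval_C]
  have hfdu : IsUnit (φ ((f.leadingCoeff : ℤ) : R)) := by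
    rw [hφunit]
    rw [hmem𝔪, not_not]
    have h3 : ι ((f.leadingCoeff : ℤ) : R) = ⟨((f.leadingCoeff : ℤ) : L), hintV _⟩ := by
      apply Subtype.ext
      rw [hιcoe]
      push_cast
      rfl
    rw [h3]
    exact hunitV _ hpfd
  have hdiffu : ∀ i j : Fin d, i ≠ j → IsUnit (φ (αR i - αR j)) := by
    intro i j hij
    rw [hφunit]
    exact hdiff𝔪 i j hij _ (by push_cast; rfl)
  refine ⟨A, inferInstance, ZMod.castHom dvd_rfl A, ZMod.castHom_injective A, φ, ⟨?_, ?_, ?_⟩, ?_⟩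
  · -- MapsTo
    rintro x ⟨i, hi⟩
    have hxα : x = αR i := Subtype.ext hi.symm
    show Polynomial.eval₂ (Int.castRingHom A) (φ x) f = 0
    rw [hevalA, hxα, Finset.prod_eq_zero (Finset.mem_univ i) (show φ (αR i) - φ (αR i) = 0 from sub_self _), mul_zero]
  · -- InjOn
    rintro x ⟨i, hi⟩ y ⟨j, hj⟩ hxy
    by_cases hxy0 : x = y
    · exact hxy0
    · exfalso
      have hij : i ≠ j := by
        rintro rfl
        exact hxy0 (Subtype.ext (hi.symm.trans hj))
      have h0 : φ (αR i - αR j) = 0 := by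
        rw [map_sub, show αR i = x from Subtype.ext hi, show αR j = y from Subtype.ext hj]
        rw [show φ x = φ y from hxy, sub_self]
      exact (hdiffu i j hij).ne_zero h0
  · -- SurjOn
    rintro a ha
    rw [Set.mem_setOf_eq, hevalA] at ha
    have hprod : ∏ i, (a - φ (αR i)) = 0 := (hfdu.mul_right_eq_zero).mp ha
    have hex : ∃ i, ¬ IsUnit (a - φ (αR i)) := by
      by_contra hcon
      push_neg at hcon
      have hun : IsUnit (∏ i, (a - φ (αR i))) :=
        Finset.prod_induction _ IsUnit (fun _ _ => IsUnit.mul) isUnit_one (fun i _ => hcon i)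
      rw [hprod] at hun
      exact not_isUnit_zero hun
    obtain ⟨i, hi⟩ := hex
    have hrest : IsUnit (∏ j ∈ Finset.univ.erase i, (a - φ (αR j))) := by
      apply Finset.prod_induction _ IsUnit (fun _ _ => IsUnit.mul) isUnit_one
      intro j hj
      by_contra hj'
      have h1 : a - φ (αR i) ∈ IsLocalRing.maximalIdeal A :=
        (IsLocalRing.mem_maximalIdeal _).mpr hi
      have h2 : a - φ (αR j) ∈ IsLocalRing.maximalIdeal A :=
        (IsLocalRing.mem_maximalIdeal _).mpr hj'
      have h4 : φ (αR i - αR j) ∈ IsLocalRing.maximalIdeal A := by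
        rw [map_sub, show φ (αR i) - φ (αR j) = (a - φ (αR j)) - (a - φ (αR i)) by ring]
        exact sub_mem h2 h1
      exact ((IsLocalRing.mem_maximalIdeal _).mp h4)
        (hdiffu i j (Finset.ne_of_mem_erase hj).symm)
    have hzero : a - φ (αR i) = 0 := by
      have h2 : (a - φ (αR i)) * ∏ j ∈ Finset.univ.erase i, (a - φ (αR j)) = 0 := by
        rw [← Finset.mul_prod_erase Finset.univ (fun j => a - φ (αR j))
          (Finset.mem_univ i)] at hprod
        exact hprod
      exact (hrest.mul_left_eq_zero).mp h2
    exact ⟨αR i, ⟨i, rfl⟩, (sub_eq_zero.mp hzero).symm⟩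
  · -- the norm divisibility
    intro γ hγint hγK hφγ
    haveI : Finite ↥(Set.range α) := (Set.finite_range α).to_subtype
    haveI hfin : FiniteDimensional ℚ (IntermediateField.adjoin ℚ (Set.range α)) :=
      IntermediateField.finiteDimensional_adjoin
        (fun x _ => ((AlgebraicClosure.isAlgebraic ℚ).isAlgebraic x).isIntegral)
    have hγ'int : IsIntegral ℤ
        ((⟨(γ : L), hγK⟩ : IntermediateField.adjoin ℚ (Set.range α))) := by
      rw [← isIntegral_algebraMap_iff
        (algebraMap (IntermediateField.adjoin ℚ (Set.range α)) L).injective]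
      exact hγint
    have hNint : IsIntegral ℤ (Algebra.norm ℚ
        (⟨(γ : L), hγK⟩ : IntermediateField.adjoin ℚ (Set.range α))) :=
      Algebra.isIntegral_norm ℚ hγ'int
    obtain ⟨z, hz⟩ := IsIntegrallyClosed.isIntegral_iff.mp hNint
    refine ⟨z, by exact_mod_cast hz, ?_⟩
    obtain ⟨s, hs, hsγ⟩ := (hφker γ).mp hφγ
    rw [hIdef, Ideal.mem_span_singleton] at hsγ
    obtain ⟨r, hr⟩ := hsγ
    have hsu : IsUnit (ι s) := by
      by_contra h
      exact hs ((hmem𝔪 s).mpr h)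
    obtain ⟨u, hu'⟩ := hsu
    have huinv : (((u⁻¹ : (↥V)ˣ) : V) : L) * (s : L) = 1 := by
      have h0 := congrArg (fun v : V => (v : L)) u.inv_mul
      rw [hu'] at h0
      simpa [hιcoe] using h0
    have hwV : (((u⁻¹ : (↥V)ˣ) : V) : L) * (r : L) ∈ V :=
      mul_mem (SetLike.coe_mem _) (hRV r r.2)
    have hγw : (γ : L) = ((p : ℕ) : L) ^ k * ((((u⁻¹ : (↥V)ˣ) : V) : L) * (r : L)) := by
      have hcoe := congrArg (fun x : R => (x : L)) hr
      push_cast at hcoe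
      calc (γ : L) = ((((u⁻¹ : (↥V)ˣ) : V) : L) * (s : L)) * (γ : L) := by
            rw [huinv, one_mul]
        _ = (((u⁻¹ : (↥V)ˣ) : V) : L) * ((s : L) * (γ : L)) := by ring
        _ = (((u⁻¹ : (↥V)ˣ) : V) : L) * (((p : ℕ) : L) ^ k * (r : L)) := by rw [hcoe]
        _ = _ := by ring
    have hnorm := Algebra.norm_eq_prod_embeddings (K := ℚ) (E := L)
      ((⟨(γ : L), hγK⟩ : IntermediateField.adjoin ℚ (Set.range α)))
    have hσV : ∀ σ : (IntermediateField.adjoin ℚ (Set.range α)) →ₐ[ℚ] L,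
        σ (⟨(γ : L), hγK⟩ : IntermediateField.adjoin ℚ (Set.range α)) ∈ V := by
      intro σ
      exact aux_mem_valuationSubring V (hγ'int.map (σ.restrictScalars ℤ))
    have hsplit0 : (∏ σ : (IntermediateField.adjoin ℚ (Set.range α)) →ₐ[ℚ] L,
          σ (⟨(γ : L), hγK⟩ : IntermediateField.adjoin ℚ (Set.range α)))
        = (γ : L) * ∏ σ ∈ Finset.univ.erase (IntermediateField.adjoin ℚ (Set.range α)).val,
            σ (⟨(γ : L), hγK⟩ : IntermediateField.adjoin ℚ (Set.range α)) := by
      exact (Finset.mul_prod_erase Finset.univ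
        (fun σ : (IntermediateField.adjoin ℚ (Set.range α)) →ₐ[ℚ] L =>
          σ (⟨(γ : L), hγK⟩ : IntermediateField.adjoin ℚ (Set.range α)))
        (Finset.mem_univ (IntermediateField.adjoin ℚ (Set.range α)).val)).symm
    have hTV : (∏ σ ∈ Finset.univ.erase (IntermediateField.adjoin ℚ (Set.range α)).val,
        σ (⟨(γ : L), hγK⟩ : IntermediateField.adjoin ℚ (Set.range α))) ∈ V :=
      prod_mem (fun σ _ => hσV σ)
    refine aux_dvd_of_div_mem V hp hintN hpuV k z
      ⟨(((u⁻¹ : (↥V)ˣ) : V) : L) * (r : L) *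
        ∏ σ ∈ Finset.univ.erase (IntermediateField.adjoin ℚ (Set.range α)).val,
          σ (⟨(γ : L), hγK⟩ : IntermediateField.adjoin ℚ (Set.range α)),
        mul_mem hwV hTV, ?_⟩
    calc ((z : ℤ) : L) = algebraMap ℚ L ((algebraMap ℤ ℚ) z) := by
          rw [eq_intCast (algebraMap ℤ ℚ), map_intCast]
      _ = ∏ σ : (IntermediateField.adjoin ℚ (Set.range α)) →ₐ[ℚ] L,
            σ (⟨(γ : L), hγK⟩ : IntermediateField.adjoin ℚ (Set.range α)) := by
          rw [hz]; exact hnorm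
      _ = _ := by
          rw [hsplit0]
          set T := ∏ σ ∈ Finset.univ.erase (IntermediateField.adjoin ℚ (Set.range α)).val,
            σ (⟨(γ : L), hγK⟩ : IntermediateField.adjoin ℚ (Set.range α)) with hT
          rw [hγw]
          ring
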